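/- Let $\alpha \in (0,2)$, $U_0 > 0$, $c_\alpha = (4/(2-\alpha))^2 - 1$, $\bar\delta_\alpha = \pm\frac{2-\alpha}{4}\sqrt{2U_0}$. Given a symmetric matrix $S$ (representing $D^2\widetilde{U}(s_0)$ restricted to $s_0^{\perp_M}$), the Hamiltonian matrix $J T^*$ with $T^* = \begin{bmatrix} I & -c_\alpha\bar\delta_\alpha I \\ -c_\alpha\bar\delta_\alpha I & (c_\alpha\bar\delta_\alpha)^2 I - \frac{(2-\alpha)^2}{8}U_0 I - S \end{bmatrix}$ is hyperbolic if and only if $\frac{(2-\alpha)^2}{8}U_0 I + S$ is positive definite. -/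

import Mathlib

open Matrix

private lemma specBlock {N : ℕ} (X : Matrix (Fin N) (Fin N) ℂ) (z : ℂ) :
    z ∈ spectrum ℂ (fromBlocks X 0 0 X) ↔ z ∈ spectrum ℂ X := by
  rw [spectrum.mem_iff, spectrum.mem_iff, Algebra.algebraMap_eq_smul_one,
    Algebra.algebraMap_eq_smul_one, Matrix.isUnit_iff_isUnit_det,
    Matrix.isUnit_iff_isUnit_det]
  have h1 : (z • (1 : Matrix (Fin N ⊕ Fin N) (Fin N ⊕ Fin N) ℂ)) - fromBlocks X 0 0 X
      = fromBlocks (z • 1 - X) 0 0 (z • 1 - X) := by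
    rw [← fromBlocks_one, fromBlocks_smul]
    ext (i|i) (j|j) <;> simp [fromBlocks]
  rw [h1, det_fromBlocks_zero₂₁]
  simp [isUnit_iff_ne_zero, not_or]

private lemma specReal {N : ℕ} (X : Matrix (Fin N) (Fin N) ℝ) (t : ℝ) :
    (t : ℂ) ∈ spectrum ℂ (X.map Complex.ofReal) ↔ t ∈ spectrum ℝ X := by
  rw [spectrum.mem_iff, spectrum.mem_iff, Algebra.algebraMap_eq_smul_one,
    Algebra.algebraMap_eq_smul_one, Matrix.isUnit_iff_isUnit_det,
    Matrix.isUnit_iff_isUnit_det]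
  have h1 : ((t:ℂ) • (1 : Matrix (Fin N) (Fin N) ℂ)) - X.map Complex.ofReal
      = (t • 1 - X).map Complex.ofReal := by
    ext i j
    by_cases h : i = j <;> simp [Matrix.one_apply, h]
  have h2 : ((t • 1 - X).map Complex.ofReal).det = ((t • 1 - X).det : ℂ) :=
    (RingHom.map_det Complex.ofRealHom _).symm
  rw [h1, h2]
  simp [isUnit_iff_ne_zero]

private lemma posDefConj {n : Type*} [Fintype n] [DecidableEq n] {A : Matrix n n ℝ} (hA : A.PosDef)
    {U : Matrix n n ℝ} (hU : IsUnit U) : (U * A * Uᴴ).PosDef := by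
  refine PosDef.of_dotProduct_mulVec_pos (isHermitian_mul_mul_conjTranspose U hA.1) fun x hx => ?_
  have hx' : Uᴴ *ᵥ x ≠ 0 := by
    intro h
    apply hx
    have : Function.Injective (Uᴴ *ᵥ ·) := by
      rw [Matrix.mulVec_injective_iff_isUnit]
      rw [Matrix.isUnit_iff_isUnit_det, Matrix.det_conjTranspose, isUnit_star,
        ← Matrix.isUnit_iff_isUnit_det]
      exact hU
    exact this (by simpa using h)
  simpa only [star_mulVec, dotProduct_mulVec, vecMul_vecMul, conjTranspose_conjTranspose]
    using hA.dotProduct_mulVec_pos hx'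

private lemma posDefOfEig {n : ℕ} {A : Matrix (Fin n) (Fin n) ℝ} (hA : A.IsHermitian)
    (h : ∀ i, 0 < hA.eigenvalues i) : A.PosDef := by
  rw [hA.spectral_theorem]
  have hd : (Matrix.diagonal (RCLike.ofReal ∘ hA.eigenvalues) : Matrix (Fin n) (Fin n) ℝ).PosDef :=
    Matrix.posDef_diagonal_iff.mpr (by simpa using h)
  exact posDefConj hd
    ((Matrix.isUnit_iff_isUnit_det _).2 (Matrix.UnitaryGroup.det_isUnit hA.eigenvectorUnitary))

theorem stmt18 (N : ℕ) (α U0 : ℝ) (hα : 0 < α ∧ α < 2) (hU0 : 0 < U0)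
    (c δ : ℝ) (hc : c = (4 / (2 - α)) ^ 2 - 1)
    (hδ : δ = (2 - α) / 4 * Real.sqrt (2 * U0) ∨ δ = -((2 - α) / 4 * Real.sqrt (2 * U0)))
    (S : Matrix (Fin N) (Fin N) ℝ) (hS : S.IsSymm)
    (J : Matrix (Fin N ⊕ Fin N) (Fin N ⊕ Fin N) ℝ) (hJ : J = fromBlocks 0 (-1) 1 0)
    (Tstar : Matrix (Fin N ⊕ Fin N) (Fin N ⊕ Fin N) ℝ)
    (hT : Tstar = fromBlocks 1 (-((c * δ) • (1 : Matrix (Fin N) (Fin N) ℝ)))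
        (-((c * δ) • (1 : Matrix (Fin N) (Fin N) ℝ)))
        ((c * δ) ^ 2 • (1 : Matrix (Fin N) (Fin N) ℝ)
          - ((2 - α) ^ 2 / 8 * U0) • (1 : Matrix (Fin N) (Fin N) ℝ) - S)) :
    (∀ z ∈ spectrum ℂ ((J * Tstar).map Complex.ofReal), z.re ≠ 0)
    ↔ (((2 - α) ^ 2 / 8 * U0) • (1 : Matrix (Fin N) (Fin N) ℝ) + S).PosDef := by
  set u : ℝ := (2 - α) ^ 2 / 8 * U0 with hu
  set C : Matrix (Fin N) (Fin N) ℝ := u • 1 + S with hCdef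
  set b : ℝ := c * δ with hb
  -- the square of J * Tstar is block-diagonal with blocks C
  have hsq : (J * Tstar) * (J * Tstar) = fromBlocks C 0 0 C := by
    subst hJ hT
    have h1 : (fromBlocks 0 (-1) 1 0 : Matrix (Fin N ⊕ Fin N) (Fin N ⊕ Fin N) ℝ) *
        fromBlocks 1 (-(b • 1)) (-(b • 1)) (b ^ 2 • 1 - u • 1 - S)
        = fromBlocks (b • 1) (C - b ^ 2 • 1) 1 (-(b • 1)) := by
      rw [fromBlocks_multiply, fromBlocks_inj]
      refine ⟨?_, ?_, ?_, ?_⟩ <;>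
        · simp [Matrix.neg_mul, Matrix.one_mul, hCdef]
          try module
    rw [h1, fromBlocks_multiply, fromBlocks_inj]
    refine ⟨?_, ?_, ?_, ?_⟩ <;>
      · simp [Matrix.smul_mul, Matrix.mul_smul, Matrix.mul_one, Matrix.one_mul, Matrix.mul_neg,
          Matrix.neg_mul, smul_smul, Matrix.mul_add, Matrix.add_mul, Matrix.sub_mul,
          Matrix.mul_sub, hCdef]
        try module
  set Mc := (J * Tstar).map Complex.ofReal with hMc
  set Cc := C.map Complex.ofReal with hCc
  have hsqC : Mc * Mc = fromBlocks Cc 0 0 Cc := by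
    have hmm : Mc * Mc = ((J * Tstar) * (J * Tstar)).map Complex.ofReal :=
      (Matrix.map_mul (f := Complex.ofRealHom)).symm
    rw [hmm, hsq, fromBlocks_map, fromBlocks_inj]
    refine ⟨rfl, ?_, ?_, rfl⟩ <;> (ext i j; simp)
  have hspec : spectrum ℂ (Mc * Mc) = (· ^ 2) '' spectrum ℂ Mc := by
    have h := spectrum.map_pow_of_pos (𝕜 := ℂ) Mc (n := 2) (by norm_num)
    rwa [pow_two] at h
  have hC : C.IsHermitian := by
    rw [Matrix.IsHermitian, conjTranspose_eq_transpose_of_trivial]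
    show Cᵀ = C
    rw [hCdef, transpose_add, transpose_smul, transpose_one, hS]
  constructor
  · intro hL
    refine posDefOfEig hC fun i => ?_
    set lam := hC.eigenvalues i with hlam
    have hmem : (lam : ℂ) ∈ spectrum ℂ Cc :=
      (specReal C lam).2 (hC.eigenvalues_mem_spectrum_real i)
    have hmem2 : (lam : ℂ) ∈ spectrum ℂ (Mc * Mc) := by
      rw [hsqC]; exact (specBlock Cc _).2 hmem
    rw [hspec] at hmem2
    obtain ⟨z, hz, hz2⟩ := hmem2
    have hre := hL z hz
    have him : z.im = 0 := by
      have h : z.re * z.im + z.im * z.re = 0 := by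
        have h0 := congrArg Complex.im hz2
        simpa [pow_two, Complex.mul_im] using h0
      have h2 : z.re * z.im = 0 := by linarith
      exact (mul_eq_zero.mp h2).resolve_left hre
    have hreal : lam = z.re ^ 2 := by
      have h := congrArg Complex.re hz2
      simp [pow_two, Complex.mul_re, him] at h
      rw [← h]; ring
    rw [hreal]
    exact lt_of_le_of_ne (sq_nonneg _) (Ne.symm (pow_ne_zero 2 hre))
  · intro hPD z hz hzre
    have hmem : z ^ 2 ∈ spectrum ℂ (Mc * Mc) := by
      rw [hspec]; exact ⟨z, hz, rfl⟩
    rw [hsqC] at hmem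
    have h2 : z ^ 2 ∈ spectrum ℂ Cc := (specBlock Cc _).1 hmem
    have hz2 : z ^ 2 = ((-(z.im ^ 2) : ℝ) : ℂ) := by
      apply Complex.ext <;> simp [pow_two, Complex.mul_re, Complex.mul_im, hzre]
    rw [hz2, specReal] at h2
    rw [spectrum.mem_iff, Algebra.algebraMap_eq_smul_one, Matrix.isUnit_iff_isUnit_det,
      isUnit_iff_ne_zero, not_not] at h2
    obtain ⟨v, hv0, hveq⟩ := Matrix.exists_mulVec_eq_zero_iff.2 h2
    have hCv : C *ᵥ v = (-(z.im ^ 2)) • v := by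
      have h := hveq
      rw [Matrix.sub_mulVec, sub_eq_zero] at h
      rw [← h, Matrix.smul_mulVec, Matrix.one_mulVec]
    have hpos := hPD.dotProduct_mulVec_pos hv0
    rw [hCv] at hpos
    have hvv : 0 ≤ dotProduct (star v) v := by
      simp only [star_trivial, dotProduct]
      exact Finset.sum_nonneg fun i _ => mul_self_nonneg _
    rw [dotProduct_smul, smul_eq_mul] at hpos
    nlinarith [sq_nonneg z.im]
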